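/- For every τ ∈ {0,1,…,T}, the dual value function dominates the conjugate of the primal value function and vice versa: ω_τ(η) ≥ ϑ_τ*(η) for all η ∈ ℝⁿ and ϑ_τ(ξ) ≥ ω_τ*(ξ) for all ξ ∈ ℝⁿ, where φ* denotes the Legendre–Fenchel conjugate of φ. -/
import Mathlib


open Matrix Finset

noncomputable section

/-- Legendre–Fenchel conjugate of an extended-real-valued function on `ℝⁿ`. -/
def eConj {n : ℕ} (φ : (Fin n → ℝ) → EReal) (y : Fin n → ℝ) : EReal :=
  ⨆ x : Fin n → ℝ, ((x ⬝ᵥ y : ℝ) : EReal) - φ x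

/-- A function is proper if it is not identically `+∞` and never takes the value `-∞`. -/
def ProperFn {n : ℕ} (φ : (Fin n → ℝ) → EReal) : Prop :=
  (∃ x, φ x ≠ ⊤) ∧ ∀ x, φ x ≠ ⊥

/-- Convexity of an extended-real-valued function, via convexity of its epigraph. -/
def ConvexFn {n : ℕ} (φ : (Fin n → ℝ) → EReal) : Prop :=
  Convex ℝ {q : (Fin n → ℝ) × ℝ | φ q.1 ≤ (q.2 : EReal)}

/-- Properness for a function of two vector variables. -/
def ProperFn2 {n : ℕ} (Λ : (Fin n → ℝ) → (Fin n → ℝ) → EReal) : Prop :=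
  (∃ x v, Λ x v ≠ ⊤) ∧ ∀ x v, Λ x v ≠ ⊥

/-- Convexity (via the epigraph) for a function of two vector variables. -/
def ConvexFn2 {n : ℕ} (Λ : (Fin n → ℝ) → (Fin n → ℝ) → EReal) : Prop :=
  Convex ℝ {q : ((Fin n → ℝ) × (Fin n → ℝ)) × ℝ | Λ q.1.1 q.1.2 ≤ (q.2 : EReal)}

/-- Lower semicontinuity for a function of two vector variables. -/
def LscFn2 {n : ℕ} (Λ : (Fin n → ℝ) → (Fin n → ℝ) → EReal) : Prop :=
  LowerSemicontinuous (fun q : (Fin n → ℝ) × (Fin n → ℝ) => Λ q.1 q.2)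

/-- Effective domain. -/
def edom {n : ℕ} (φ : (Fin n → ℝ) → EReal) : Set (Fin n → ℝ) := {x | φ x ≠ ⊤}

/-- Relative interior of a set in `ℝⁿ`: points of the set around which the set is a
neighbourhood within the affine span of the set. -/
def relint {n : ℕ} (S : Set (Fin n → ℝ)) : Set (Fin n → ℝ) :=
  {x ∈ S | S ∈ nhdsWithin x (affineSpan ℝ S : Set (Fin n → ℝ))}

/-- The convex subdifferential of an extended-real-valued function. -/
def subdiff {n : ℕ} (φ : (Fin n → ℝ) → EReal) (x : Fin n → ℝ) : Set (Fin n → ℝ) :=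
  {y | ∀ z, φ x + ((y ⬝ᵥ (z - x) : ℝ) : EReal) ≤ φ z}

/-- The dual Lagrangian `K_t(p,w) = sup_{x,v} { x·w + v·p − L_t(x,v) }`. -/
def dualL {n : ℕ} (L : ℕ → (Fin n → ℝ) → (Fin n → ℝ) → EReal) (t : ℕ)
    (p w : Fin n → ℝ) : EReal :=
  ⨆ x : Fin n → ℝ, ⨆ v : Fin n → ℝ, ((x ⬝ᵥ w + v ⬝ᵥ p : ℝ) : EReal) - L t x v

/-- The dual terminal cost `f(b) = g*(−b)`. -/
def dualF {n : ℕ} (g : (Fin n → ℝ) → EReal) (b : Fin n → ℝ) : EReal := eConj g (-b)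

/-- Primal value function `ϑ_τ(ξ)` of the discrete-time Bolza problem. -/
def primalVal {n : ℕ} (T : ℕ) (L : ℕ → (Fin n → ℝ) → (Fin n → ℝ) → EReal)
    (g : (Fin n → ℝ) → EReal) (τ : ℕ) (ξ : Fin n → ℝ) : EReal :=
  ⨅ x : {x : ℕ → Fin n → ℝ // x τ = ξ},
    (∑ t ∈ Finset.Icc (τ + 1) T, L t (x.1 (t - 1)) (x.1 t - x.1 (t - 1))) + g (x.1 T)

/-- Dual value function `ω_τ(η)` of the dual discrete-time Bolza problem. -/
def dualVal {n : ℕ} (T : ℕ) (L : ℕ → (Fin n → ℝ) → (Fin n → ℝ) → EReal)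
    (g : (Fin n → ℝ) → EReal) (τ : ℕ) (η : Fin n → ℝ) : EReal :=
  ⨅ p : {p : ℕ → Fin n → ℝ // p τ = -η},
    (∑ t ∈ Finset.Icc (τ + 1) T, dualL L t (p.1 t) (p.1 t - p.1 (t - 1))) + dualF g (p.1 T)

/-- Feasible velocities of the primal system: `Γ_L(t,x) = {v : L_t(x,v) ∈ ℝ}`. -/
def GammaL {n : ℕ} (L : ℕ → (Fin n → ℝ) → (Fin n → ℝ) → EReal) (t : ℕ)
    (x : Fin n → ℝ) : Set (Fin n → ℝ) :=
  {v | ∃ r : ℝ, L t x v = (r : EReal)}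

/-- Implicit state constraint of the primal system: `𝐗(t) = {x : Γ_L(t,x) ≠ ∅}`. -/
def XX {n : ℕ} (L : ℕ → (Fin n → ℝ) → (Fin n → ℝ) → EReal) (t : ℕ) : Set (Fin n → ℝ) :=
  {x | (GammaL L t x).Nonempty}

/-- Feasible velocities of the dual system: `Γ_K(t,p) = {w : K_t(p+w,w) ∈ ℝ}`. -/
def GammaK {n : ℕ} (L : ℕ → (Fin n → ℝ) → (Fin n → ℝ) → EReal) (t : ℕ)
    (p : Fin n → ℝ) : Set (Fin n → ℝ) :=
  {w | ∃ r : ℝ, dualL L t (p + w) w = (r : EReal)}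

/-- Implicit state constraint of the dual system: `𝐏(t) = {p : Γ_K(t,p) ≠ ∅}`. -/
def PP {n : ℕ} (L : ℕ → (Fin n → ℝ) → (Fin n → ℝ) → EReal) (t : ℕ) : Set (Fin n → ℝ) :=
  {p | (GammaK L t p).Nonempty}

/-- Qualification condition (H) over the primal problem. -/
def HypH {n : ℕ} (T : ℕ) (L : ℕ → (Fin n → ℝ) → (Fin n → ℝ) → EReal)
    (g : (Fin n → ℝ) → EReal) : Prop :=
  ∃ xb : ℕ → Fin n → ℝ, xb T ∈ relint (edom g) ∧
    ∀ t, 1 ≤ t → t ≤ T →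
      xb (t - 1) ∈ relint (XX L t) ∧ xb t - xb (t - 1) ∈ relint (GammaL L t (xb (t - 1)))

/-- Qualification condition (H') over the dual problem. -/
def HypH' {n : ℕ} (T : ℕ) (L : ℕ → (Fin n → ℝ) → (Fin n → ℝ) → EReal)
    (g : (Fin n → ℝ) → EReal) : Prop :=
  ∃ pb : ℕ → Fin n → ℝ, pb T ∈ relint (edom (dualF g)) ∧
    ∀ t, 1 ≤ t → t ≤ T →
      pb (t - 1) ∈ relint (PP L t) ∧ pb t - pb (t - 1) ∈ relint (GammaK L t (pb (t - 1)))

/-- The Hamiltonian `H_t(x,p) = sup_v { p·v − L_t(x,v) }`. -/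
def Ham {n : ℕ} (L : ℕ → (Fin n → ℝ) → (Fin n → ℝ) → EReal) (t : ℕ)
    (x p : Fin n → ℝ) : EReal :=
  ⨆ v : Fin n → ℝ, ((p ⬝ᵥ v : ℝ) : EReal) - L t x v

/-- `{(x_t,p_t)}` is a discrete-time Hamiltonian trajectory on `[τ,T]`:
`(−Δp_t, Δx_t) ∈ ∂H_t(x_{t−1}, p_t)` for `t = τ+1,…,T`, where `∂H_t` is the
concave-convex subdifferential of the Hamiltonian. -/
def IsHamTraj {n : ℕ} (T : ℕ) (L : ℕ → (Fin n → ℝ) → (Fin n → ℝ) → EReal)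
    (τ : ℕ) (x p : ℕ → Fin n → ℝ) : Prop :=
  ∀ t, τ + 1 ≤ t → t ≤ T →
    (∀ y : Fin n → ℝ,
        Ham L t y (p t) + (((p t - p (t - 1)) ⬝ᵥ (y - x (t - 1)) : ℝ) : EReal)
          ≤ Ham L t (x (t - 1)) (p t)) ∧
    (∀ q : Fin n → ℝ,
        Ham L t (x (t - 1)) (p t)
          ≤ Ham L t (x (t - 1)) q - (((x t - x (t - 1)) ⬝ᵥ (q - p t) : ℝ) : EReal))

end

section auxlemmas

open Matrix Finset

private lemma ereal_coe_sum {α : Type*} (s : Finset α) (f : α → ℝ) :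
    ((∑ i ∈ s, f i : ℝ) : EReal) = ∑ i ∈ s, ((f i : ℝ) : EReal) := by
  induction s using Finset.cons_induction with
  | empty => simp
  | cons a s ha ih => rw [Finset.sum_cons, Finset.sum_cons, ← ih, EReal.coe_add]

private lemma ereal_sum_ne_bot {α : Type*} (s : Finset α) (f : α → EReal)
    (h : ∀ i ∈ s, f i ≠ ⊥) : ∑ i ∈ s, f i ≠ ⊥ := by
  induction s using Finset.cons_induction with
  | empty => simp
  | cons a s ha ih =>
    rw [Finset.sum_cons]
    rw [Ne, EReal.add_eq_bot_iff]
    push_neg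
    exact ⟨h a (Finset.mem_cons_self a s), ih fun i hi => h i (Finset.mem_cons_of_mem hi)⟩

private lemma esub_comm (a : ℝ) {b c : EReal} (h : (a : EReal) - b ≤ c) :
    (a : EReal) - c ≤ b := by
  induction b using EReal.rec with
  | bot =>
    rw [EReal.coe_sub_bot] at h
    rw [top_le_iff.mp h, EReal.sub_top]
  | top => exact le_top
  | coe b =>
    induction c using EReal.rec with
    | bot =>
      rw [← EReal.coe_sub] at h
      exact absurd (le_bot_iff.mp h) (EReal.coe_ne_bot _)
    | top => rw [EReal.sub_top]; exact bot_le
    | coe c =>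
      rw [← EReal.coe_sub] at h ⊢
      rw [EReal.coe_le_coe_iff] at h ⊢
      linarith

private lemma real_le_add_of_sub_le (c : ℝ) {A B : EReal} (hA : A ≠ ⊥) (hB : B ≠ ⊥)
    (h : (c : EReal) - A ≤ B) : (c : EReal) ≤ A + B := by
  induction A using EReal.rec with
  | bot => exact absurd rfl hA
  | top => rw [EReal.top_add_of_ne_bot hB]; exact le_top
  | coe r =>
    induction B using EReal.rec with
    | bot => exact absurd rfl hB
    | top => rw [EReal.add_top_of_ne_bot (by simp)]; exact le_top
    | coe s =>
      rw [← EReal.coe_sub, EReal.coe_le_coe_iff] at h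
      rw [← EReal.coe_add, EReal.coe_le_coe_iff]
      linarith

private lemma real_telescope (τ T : ℕ) (h : τ ≤ T) (F : ℕ → ℝ) :
    ∑ t ∈ Finset.Icc (τ + 1) T, (F t - F (t - 1)) = F T - F τ := by
  induction T, h using Nat.le_induction with
  | base => rw [Finset.Icc_eq_empty (by omega)]; simp
  | succ T hT ih =>
    rw [Finset.Icc_add_one_left_eq_Ioc] at ih ⊢
    rw [Finset.sum_Ioc_succ_top (by omega), ih]
    simp only [Nat.add_sub_cancel]
    ring

private lemma dualL_ne_bot {n : ℕ} (L : ℕ → (Fin n → ℝ) → (Fin n → ℝ) → EReal) (t : ℕ)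
    (hp : ProperFn2 (L t)) (p w : Fin n → ℝ) : dualL L t p w ≠ ⊥ := by
  obtain ⟨⟨x₀, v₀, hx⟩, hb⟩ := hp
  obtain ⟨r, hr⟩ : ∃ r : ℝ, L t x₀ v₀ = (r : EReal) := by
    lift L t x₀ v₀ to ℝ using ⟨hx, hb x₀ v₀⟩ with r hr
    exact ⟨r, rfl⟩
  have h1 : ((x₀ ⬝ᵥ w + v₀ ⬝ᵥ p - r : ℝ) : EReal) ≤ dualL L t p w := by
    rw [EReal.coe_sub]
    exact le_iSup_of_le x₀ (le_iSup_of_le v₀ (by rw [hr]))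
  intro hbot
  rw [hbot, le_bot_iff] at h1
  exact EReal.coe_ne_bot _ h1

private lemma dualF_ne_bot {n : ℕ} (g : (Fin n → ℝ) → EReal) (hg : ProperFn g)
    (b : Fin n → ℝ) : dualF g b ≠ ⊥ := by
  obtain ⟨⟨x₀, hx⟩, hb⟩ := hg
  obtain ⟨r, hr⟩ : ∃ r : ℝ, g x₀ = (r : EReal) := by
    lift g x₀ to ℝ using ⟨hx, hb x₀⟩ with r hr
    exact ⟨r, rfl⟩
  have h1 : ((x₀ ⬝ᵥ (-b) - r : ℝ) : EReal) ≤ dualF g b := by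
    rw [EReal.coe_sub]
    exact le_iSup_of_le x₀ (by rw [hr])
  intro hbot
  rw [hbot, le_bot_iff] at h1
  exact EReal.coe_ne_bot _ h1

/-- Pointwise weak duality along arbitrary primal and dual trajectories. -/
private lemma key_weak_duality {n : ℕ} (T : ℕ)
    (L : ℕ → (Fin n → ℝ) → (Fin n → ℝ) → EReal) (g : (Fin n → ℝ) → EReal)
    (hL : ∀ t, 1 ≤ t → t ≤ T → ProperFn2 (L t)) (hg : ProperFn g)
    (τ : ℕ) (hτ : τ ≤ T) (x p : ℕ → Fin n → ℝ) :
    ((x τ ⬝ᵥ (-(p τ)) : ℝ) : EReal) ≤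
      ((∑ t ∈ Finset.Icc (τ + 1) T, L t (x (t - 1)) (x t - x (t - 1))) + g (x T)) +
        ((∑ t ∈ Finset.Icc (τ + 1) T, dualL L t (p t) (p t - p (t - 1))) + dualF g (p T)) := by
  set a : ℕ → ℝ := fun t => x (t - 1) ⬝ᵥ (p t - p (t - 1)) + (x t - x (t - 1)) ⬝ᵥ p t with ha
  -- per-step Fenchel inequality
  have hstep : ∀ t ∈ Finset.Icc (τ + 1) T,
      ((a t : ℝ) : EReal) ≤ L t (x (t - 1)) (x t - x (t - 1)) +
        dualL L t (p t) (p t - p (t - 1)) := by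
    intro t ht
    rw [Finset.mem_Icc] at ht
    have hprop := hL t (by omega) ht.2
    refine real_le_add_of_sub_le _ (hprop.2 _ _) (dualL_ne_bot L t hprop _ _) ?_
    exact le_iSup_of_le (x (t - 1)) (le_iSup_of_le (x t - x (t - 1)) le_rfl)
  -- terminal Fenchel inequality
  have hterm : ((x T ⬝ᵥ (-(p T)) : ℝ) : EReal) ≤ g (x T) + dualF g (p T) := by
    refine real_le_add_of_sub_le _ (hg.2 _) (dualF_ne_bot g hg _) ?_
    exact le_iSup_of_le (x T) le_rfl
  -- telescoping of the real parts
  have htel : ∑ t ∈ Finset.Icc (τ + 1) T, a t = x T ⬝ᵥ p T - x τ ⬝ᵥ p τ := by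
    have : ∀ t ∈ Finset.Icc (τ + 1) T, a t =
        (fun s => x s ⬝ᵥ p s) t - (fun s => x s ⬝ᵥ p s) (t - 1) := by
      intro t ht
      simp only [ha, dotProduct_sub, sub_dotProduct]
      ring
    rw [Finset.sum_congr rfl this, real_telescope τ T hτ]
  have hsum : ((∑ t ∈ Finset.Icc (τ + 1) T, a t : ℝ) : EReal) ≤
      (∑ t ∈ Finset.Icc (τ + 1) T, L t (x (t - 1)) (x t - x (t - 1))) +
        ∑ t ∈ Finset.Icc (τ + 1) T, dualL L t (p t) (p t - p (t - 1)) := by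
    rw [ereal_coe_sum, ← Finset.sum_add_distrib]
    exact Finset.sum_le_sum hstep
  have hmain : ((x τ ⬝ᵥ (-(p τ)) : ℝ) : EReal) =
      ((∑ t ∈ Finset.Icc (τ + 1) T, a t : ℝ) : EReal) + ((x T ⬝ᵥ (-(p T)) : ℝ) : EReal) := by
    rw [← EReal.coe_add, EReal.coe_eq_coe_iff, htel]
    simp only [dotProduct_neg]
    ring
  calc ((x τ ⬝ᵥ (-(p τ)) : ℝ) : EReal)
      = _ + _ := hmain
    _ ≤ ((∑ t ∈ Finset.Icc (τ + 1) T, L t (x (t - 1)) (x t - x (t - 1))) +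
          ∑ t ∈ Finset.Icc (τ + 1) T, dualL L t (p t) (p t - p (t - 1))) +
          (g (x T) + dualF g (p T)) := add_le_add hsum hterm
    _ = _ := add_add_add_comm _ _ _ _

end auxlemmas

/-- For every `τ ∈ {0,…,T}`: `ω_τ ≥ ϑ_τ*` and `ϑ_τ ≥ ω_τ*`. -/
theorem dual_dominates_conjugate (n T : ℕ) (hT : 1 ≤ T)
    (L : ℕ → (Fin n → ℝ) → (Fin n → ℝ) → EReal) (g : (Fin n → ℝ) → EReal)
    (hL : ∀ t, 1 ≤ t → t ≤ T → ProperFn2 (L t) ∧ ConvexFn2 (L t) ∧ LscFn2 (L t))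
    (hg : ProperFn g ∧ ConvexFn g ∧ LowerSemicontinuous g)
    (τ : ℕ) (hτ : τ ≤ T) :
    (∀ η : Fin n → ℝ, eConj (primalVal T L g τ) η ≤ dualVal T L g τ η) ∧
    (∀ ξ : Fin n → ℝ, eConj (dualVal T L g τ) ξ ≤ primalVal T L g τ ξ) := by
  have hLp : ∀ t, 1 ≤ t → t ≤ T → ProperFn2 (L t) := fun t h1 h2 => (hL t h1 h2).1
  constructor
  · intro η
    refine iSup_le fun ξ => le_iInf fun p => ?_
    refine esub_comm _ (le_iInf fun x => esub_comm _ ?_)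
    have := key_weak_duality T L g hLp hg.1 τ hτ x.1 p.1
    rw [x.2, p.2, neg_neg] at this
    exact EReal.sub_le_of_le_add' this
  · intro ξ
    refine iSup_le fun η => le_iInf fun x => ?_
    refine esub_comm _ (le_iInf fun p => ?_)
    have := key_weak_duality T L g hLp hg.1 τ hτ x.1 p.1
    rw [x.2, p.2, neg_neg, dotProduct_comm] at this
    exact EReal.sub_le_of_le_add' this
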